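/- arXiv:1712.04462 — 4 statements merged into one kernel-verified Lean document; each statement's English description precedes it below -/
import Mathlib

section
/- Let Ψ : ℝ^L → ℝ^N be a linear map between Euclidean spaces with adjoint Ψ† : ℝ^N → ℝ^L satisfying Ψ†Ψ = I (the identity on ℝ^L). Let g : ℝ^L → ℝ be convex, let λ > 0, and let z ∈ ℝ^N. If p ∈ ℝ^L is a global minimiser of u ↦ g(u) + ‖u − Ψ†z‖₂²/(2λ) over ℝ^L, then z + Ψ(p − Ψ†z) is a global minimiser of u ↦ g(Ψ†u) + ‖u − z‖₂²/(2λ) over ℝ^N. -/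
open ContinuousLinearMap
open scoped RealInnerProductSpace

/-- Composition rule underlying equation (35) of the paper: if `Ψ† Ψ = I` and `p`
minimises `u ↦ g u + ‖u - Ψ† z‖² / (2λ)` over `ℝ^L`, then `z + Ψ (p - Ψ† z)`
minimises `u ↦ g (Ψ† u) + ‖u - z‖² / (2λ)` over `ℝ^N`. -/
theorem analysis_prox_composition
    (L N : ℕ)
    (Ψ : EuclideanSpace ℝ (Fin L) →L[ℝ] EuclideanSpace ℝ (Fin N))
    (h : (adjoint Ψ).comp Ψ = ContinuousLinearMap.id ℝ (EuclideanSpace ℝ (Fin L)))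
    (g : EuclideanSpace ℝ (Fin L) → ℝ) (hg : ConvexOn ℝ Set.univ g)
    (lam : ℝ) (hlam : 0 < lam)
    (z : EuclideanSpace ℝ (Fin N))
    (p : EuclideanSpace ℝ (Fin L))
    (hp : ∀ u : EuclideanSpace ℝ (Fin L),
      g p + ‖p - adjoint Ψ z‖ ^ 2 / (2 * lam) ≤
        g u + ‖u - adjoint Ψ z‖ ^ 2 / (2 * lam)) :
    ∀ u : EuclideanSpace ℝ (Fin N),
      g (adjoint Ψ (z + Ψ (p - adjoint Ψ z))) +
          ‖z + Ψ (p - adjoint Ψ z) - z‖ ^ 2 / (2 * lam) ≤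
        g (adjoint Ψ u) + ‖u - z‖ ^ 2 / (2 * lam) := by
  have hAd : ∀ x, adjoint Ψ (Ψ x) = x := fun x =>
    ContinuousLinearMap.ext_iff.mp h x
  have hiso : ∀ x, ‖Ψ x‖ = ‖x‖ := by
    intro x
    have h1 : ⟪Ψ x, Ψ x⟫ = ⟪x, x⟫ := by
      rw [← ContinuousLinearMap.adjoint_inner_left, hAd]
    rw [real_inner_self_eq_norm_sq, real_inner_self_eq_norm_sq] at h1
    nlinarith [norm_nonneg (Ψ x), norm_nonneg x]
  have hle : ∀ w, ‖adjoint Ψ w‖ ≤ ‖w‖ := by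
    intro w
    have h1 : ‖adjoint Ψ w‖ ^ 2 = ⟪w, Ψ (adjoint Ψ w)⟫ := by
      rw [← real_inner_self_eq_norm_sq, ContinuousLinearMap.adjoint_inner_left]
    have h2 : ⟪w, Ψ (adjoint Ψ w)⟫ ≤ ‖w‖ * ‖Ψ (adjoint Ψ w)‖ := real_inner_le_norm _ _
    rw [hiso] at h2
    nlinarith [norm_nonneg (adjoint Ψ w), norm_nonneg w]
  intro u
  have e1 : z + Ψ (p - adjoint Ψ z) - z = Ψ (p - adjoint Ψ z) := by
    abel
  have e2 : adjoint Ψ (z + Ψ (p - adjoint Ψ z)) = p := by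
    rw [map_add, hAd]
    abel
  rw [e1, e2, hiso]
  have h3 : ‖adjoint Ψ u - adjoint Ψ z‖ ≤ ‖u - z‖ := by
    rw [← map_sub]; exact hle _
  have h4 := hp (adjoint Ψ u)
  have h5 : ‖adjoint Ψ u - adjoint Ψ z‖ ^ 2 ≤ ‖u - z‖ ^ 2 := by
    nlinarith [norm_nonneg (adjoint Ψ u - adjoint Ψ z), norm_nonneg (u - z)]
  have h6 : ‖adjoint Ψ u - adjoint Ψ z‖ ^ 2 / (2 * lam) ≤ ‖u - z‖ ^ 2 / (2 * lam) := by
    apply div_le_div_of_nonneg_right h5 (by linarith) |>.trans_eq rfl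
  linarith
end

section
/- Let Ψ : ℝ^L → ℝ^N be a linear map between Euclidean spaces with adjoint Ψ† : ℝ^N → ℝ^L satisfying Ψ†Ψ = I (the identity on ℝ^L). Fix λ > 0, μ > 0 and z ∈ ℝ^N, and let soft_{λμ} denote componentwise soft-thresholding on ℝ^L with threshold λμ (soft_τ(v)_k = v_k(|v_k| − τ)/|v_k| if |v_k| > τ, else 0). Then the point z + Ψ(soft_{λμ}(Ψ†z) − Ψ†z) is a global minimiser over u ∈ ℝ^N of the function u ↦ μ‖Ψ†u‖₁ + ‖u − z‖₂²/(2λ), where ‖v‖₁ = ∑_k |v_k|. -/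
set_option maxHeartbeats 1000000

open ContinuousLinearMap

/-- Componentwise soft-thresholding operator with threshold `τ` on `ℝ^L`. -/
noncomputable def softThresh {L : ℕ} (τ : ℝ) (v : EuclideanSpace ℝ (Fin L)) :
    EuclideanSpace ℝ (Fin L) :=
  WithLp.toLp 2 (fun k => if τ < |v k| then v k * (|v k| - τ) / |v k| else 0)

lemma soft_scalar_min (τ w t : ℝ) (hτ : 0 < τ) :
    τ * |(if τ < |w| then w * (|w| - τ) / |w| else 0)| +
      ((if τ < |w| then w * (|w| - τ) / |w| else 0) - w) ^ 2 / 2 ≤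
    τ * |t| + (t - w) ^ 2 / 2 := by
  split_ifs with hw
  · have hw0 : w ≠ 0 := by
      intro h0; rw [h0, abs_zero] at hw; linarith
    rcases lt_or_gt_of_ne hw0 with hneg | hpos
    · have habs : |w| = -w := abs_of_neg hneg
      rw [habs] at hw ⊢
      have hs : w * (-w - τ) / -w = w + τ := by
        rw [div_eq_iff (neg_ne_zero.mpr (ne_of_lt hneg))]; ring
      rw [hs]
      have hsabs : |w + τ| = -(w + τ) := abs_of_neg (by linarith)
      rw [hsabs]
      have h1 : t * w ≤ |t| * (-w) := by
        nlinarith [neg_abs_le t, abs_nonneg t]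
      nlinarith [sq_nonneg (|t| + w + τ), sq_abs t]
    · have habs : |w| = w := abs_of_pos hpos
      rw [habs] at hw ⊢
      have hs : w * (w - τ) / w = w - τ := by
        rw [div_eq_iff (ne_of_gt hpos)]; ring
      rw [hs]
      have hsabs : |w - τ| = w - τ := abs_of_pos (by linarith)
      rw [hsabs]
      have h1 : t * w ≤ |t| * w := mul_le_mul_of_nonneg_right (le_abs_self t) hpos.le
      nlinarith [sq_nonneg (|t| - w + τ), sq_abs t]
  · push_neg at hw
    have h1 : t * w ≤ |t| * τ := by
      calc t * w ≤ |t * w| := le_abs_self _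
        _ = |t| * |w| := abs_mul t w
        _ ≤ |t| * τ := mul_le_mul_of_nonneg_left hw (abs_nonneg t)
    simp only [abs_zero, mul_zero]
    nlinarith [sq_abs t]

/-- Equation (35) of the paper: under `Ψ† Ψ = I`, the proximity operator at `z` with
parameter `λ` of the analysis sparsity prior `x ↦ μ ‖Ψ† x‖₁` is given explicitly by
`z + Ψ (soft_{λμ}(Ψ† z) - Ψ† z)`, i.e. this point globally minimises
`u ↦ μ ‖Ψ† u‖₁ + ‖u - z‖² / (2λ)`. -/
theorem analysis_prox_soft_thresholding
    (L N : ℕ)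
    (Ψ : EuclideanSpace ℝ (Fin L) →L[ℝ] EuclideanSpace ℝ (Fin N))
    (h : (adjoint Ψ).comp Ψ = ContinuousLinearMap.id ℝ (EuclideanSpace ℝ (Fin L)))
    (lam μ : ℝ) (hlam : 0 < lam) (hμ : 0 < μ)
    (z : EuclideanSpace ℝ (Fin N)) :
    ∀ u : EuclideanSpace ℝ (Fin N),
      μ * (∑ k, |adjoint Ψ (z + Ψ (softThresh (lam * μ) (adjoint Ψ z) - adjoint Ψ z)) k|) +
          ‖z + Ψ (softThresh (lam * μ) (adjoint Ψ z) - adjoint Ψ z) - z‖ ^ 2 / (2 * lam) ≤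
        μ * (∑ k, |adjoint Ψ u k|) + ‖u - z‖ ^ 2 / (2 * lam) := by
  intro u
  set w : EuclideanSpace ℝ (Fin L) := adjoint Ψ z with hw
  set s : EuclideanSpace ℝ (Fin L) := softThresh (lam * μ) w with hs
  set v : EuclideanSpace ℝ (Fin L) := adjoint Ψ u with hv
  have hadj : ∀ x : EuclideanSpace ℝ (Fin L), adjoint Ψ (Ψ x) = x := by
    intro x
    have := ContinuousLinearMap.ext_iff.mp h x
    simpa using this
  have hΨnorm : ∀ x : EuclideanSpace ℝ (Fin L), ‖Ψ x‖ = ‖x‖ := by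
    intro x
    have hinner : (inner ℝ (Ψ x) (Ψ x) : ℝ) = inner ℝ x x := by
      rw [← ContinuousLinearMap.adjoint_inner_left, hadj]
    rw [real_inner_self_eq_norm_sq, real_inner_self_eq_norm_sq] at hinner
    nlinarith [norm_nonneg (Ψ x), norm_nonneg x]
  have hadj_le : ∀ x : EuclideanSpace ℝ (Fin N), ‖adjoint Ψ x‖ ≤ ‖x‖ := by
    intro x
    have h1 : ‖adjoint Ψ x‖ ^ 2 = inner ℝ (adjoint Ψ x) (adjoint Ψ x) :=
      (real_inner_self_eq_norm_sq _).symm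
    have h2 : (inner ℝ (adjoint Ψ x) (adjoint Ψ x) : ℝ) = inner ℝ x (Ψ (adjoint Ψ x)) := by
      rw [ContinuousLinearMap.adjoint_inner_left]
    have h3 : (inner ℝ x (Ψ (adjoint Ψ x)) : ℝ) ≤ ‖x‖ * ‖Ψ (adjoint Ψ x)‖ := real_inner_le_norm _ _
    rw [hΨnorm] at h3
    rcases eq_or_lt_of_le (norm_nonneg (adjoint Ψ x)) with h0 | h0
    · rw [← h0]; exact norm_nonneg x
    · have : ‖adjoint Ψ x‖ ^ 2 ≤ ‖x‖ * ‖adjoint Ψ x‖ := by rw [h1, h2]; exact h3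
      nlinarith
  have h1 : adjoint Ψ (z + Ψ (s - w)) = s := by
    rw [map_add, hadj, ← hw]; abel
  have h2 : z + Ψ (s - w) - z = Ψ (s - w) := by abel
  rw [h1, h2, hΨnorm]
  have hvw : ‖v - w‖ ≤ ‖u - z‖ := by
    rw [show v - w = adjoint Ψ (u - z) by rw [map_sub]]
    exact hadj_le _
  have h4 : ‖v - w‖ ^ 2 ≤ ‖u - z‖ ^ 2 := pow_le_pow_left₀ (norm_nonneg _) hvw 2
  have hle2 : ‖v - w‖ ^ 2 / (2 * lam) ≤ ‖u - z‖ ^ 2 / (2 * lam) :=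
    div_le_div_of_nonneg_right h4 (by positivity)
  have hnormsq : ∀ x : EuclideanSpace ℝ (Fin L), ‖x‖ ^ 2 = ∑ k, (x k) ^ 2 := by
    intro x
    rw [EuclideanSpace.norm_eq, Real.sq_sqrt (by positivity)]
    simp [Real.norm_eq_abs, sq_abs]
  have key : μ * (∑ k, |s k|) + ‖s - w‖ ^ 2 / (2 * lam) ≤
      μ * (∑ k, |v k|) + ‖v - w‖ ^ 2 / (2 * lam) := by
    rw [hnormsq, hnormsq]
    have term : ∀ k : Fin L,
        μ * |s k| + ((s - w) k) ^ 2 / (2 * lam) ≤ μ * |v k| + ((v - w) k) ^ 2 / (2 * lam) := by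
      intro k
      have hτ : 0 < lam * μ := mul_pos hlam hμ
      have hkey := soft_scalar_min (lam * μ) (w k) (v k) hτ
      have hsk : s k = if lam * μ < |w k| then w k * (|w k| - lam * μ) / |w k| else 0 := rfl
      rw [← hsk] at hkey
      have hsub : (s - w) k = s k - w k := by
        simp [PiLp.sub_apply]
      have hsub2 : (v - w) k = v k - w k := by
        simp [PiLp.sub_apply]
      rw [hsub, hsub2]
      have hmul := div_le_div_of_nonneg_right hkey hlam.le
      calc μ * |s k| + (s k - w k) ^ 2 / (2 * lam)
          = (lam * μ * |s k| + (s k - w k) ^ 2 / 2) / lam := by field_simp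
        _ ≤ (lam * μ * |v k| + (v k - w k) ^ 2 / 2) / lam := hmul
        _ = μ * |v k| + (v k - w k) ^ 2 / (2 * lam) := by field_simp
    calc μ * (∑ k, |s k|) + (∑ k, ((s - w) k) ^ 2) / (2 * lam)
        = ∑ k, (μ * |s k| + ((s - w) k) ^ 2 / (2 * lam)) := by
          rw [Finset.mul_sum, Finset.sum_div, Finset.sum_add_distrib]
      _ ≤ ∑ k, (μ * |v k| + ((v - w) k) ^ 2 / (2 * lam)) :=
          Finset.sum_le_sum fun k _ => term k
      _ = μ * (∑ k, |v k|) + (∑ k, ((v - w) k) ^ 2) / (2 * lam) := by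
          rw [Finset.mul_sum, Finset.sum_div, Finset.sum_add_distrib]
    -- done
  linarith
end

section
/- Let E be a Euclidean space, f : E → ℝ convex, g : E → ℝ convex and differentiable, and λ > 0. Then x* ∈ E is a global minimiser of f + g if and only if x* is a global minimiser of the function u ↦ f(u) + ‖u − (x* − λ∇g(x*))‖₂²/(2λ); equivalently, x* = prox_{λf}(x* − λ∇g(x*)). -/
open Filter Topology Set

private lemma slope_tendsto {h : ℝ → ℝ} {d : ℝ} (hd : HasDerivAt h d 0) :
    Tendsto (fun t => (h t - h 0) / t) (𝓝[>] (0:ℝ)) (𝓝 d) := by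
  have := hasDerivAt_iff_tendsto_slope.mp hd
  have h2 : Tendsto (slope h 0) (𝓝[>] (0:ℝ)) (𝓝 d) :=
    this.mono_left (nhdsWithin_mono _ (fun t ht => ne_of_gt ht))
  refine h2.congr (fun t => ?_)
  simp [slope_def_field]

private lemma aux_le {h : ℝ → ℝ} {d a : ℝ} (hd : HasDerivAt h d 0)
    (H : ∀ t ∈ Set.Ioc (0:ℝ) 1, a ≤ (h t - h 0) / t) : a ≤ d :=
  ge_of_tendsto (slope_tendsto hd)
    (eventually_of_mem (Ioc_mem_nhdsGT_of_mem ⟨le_refl (0:ℝ), one_pos⟩) H)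

private lemma aux_ge {h : ℝ → ℝ} {d b : ℝ} (hd : HasDerivAt h d 0)
    (H : ∀ t ∈ Set.Ioc (0:ℝ) 1, (h t - h 0) / t ≤ b) : d ≤ b :=
  le_of_tendsto (slope_tendsto hd)
    (eventually_of_mem (Ioc_mem_nhdsGT_of_mem ⟨le_refl (0:ℝ), one_pos⟩) H)

private lemma le_of_Ioc {a b c : ℝ} (hc : 0 ≤ c)
    (H : ∀ t ∈ Set.Ioc (0:ℝ) 1, a ≤ b + t * c) : a ≤ b := by
  have ht : Tendsto (fun t : ℝ => b + t * c) (𝓝[>] (0:ℝ)) (𝓝 b) := by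
    have : Tendsto (fun t : ℝ => b + t * c) (𝓝 (0:ℝ)) (𝓝 (b + 0 * c)) := by
      exact (tendsto_id.mul_const c).const_add b
    simpa using this.mono_left nhdsWithin_le_nhds
  exact ge_of_tendsto ht (eventually_of_mem (Ioc_mem_nhdsGT_of_mem ⟨le_refl (0:ℝ), one_pos⟩) H)

private lemma dir_deriv {E : Type*} [NormedAddCommGroup E] [InnerProductSpace ℝ E] [CompleteSpace E]
    {g : E → ℝ} {w x : E} (hg : HasGradientAt g w x) (v : E) :
    HasDerivAt (fun t : ℝ => g (x + t • v)) (inner ℝ w v : ℝ) 0 := by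
  have hline : HasDerivAt (fun t : ℝ => x + t • v) v 0 := by
    simpa using ((hasDerivAt_id (0:ℝ)).smul_const v).const_add x
  have hF : HasFDerivAt g (InnerProductSpace.toDual ℝ E w) ((fun t : ℝ => x + t • v) 0) := by
    simpa using hg.hasFDerivAt
  have h := hF.comp_hasDerivAt 0 hline
  simp only [InnerProductSpace.toDual_apply_apply] at h
  exact h

/-- The fixed-point equation (17) of the paper from which the forward–backward
iteration is derived: for convex `f` and convex differentiable `g` on a Euclidean
space, `x*` globally minimises `f + g` if and only if
`x* = prox_{λf}(x* - λ∇g(x*))`, i.e. `x*` globally minimises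
`u ↦ f u + ‖u - (x* - λ∇g(x*))‖² / (2λ)`. -/
theorem forward_backward_fixed_point
    {E : Type*} [NormedAddCommGroup E] [InnerProductSpace ℝ E] [FiniteDimensional ℝ E]
    (f g : E → ℝ) (hf : ConvexOn ℝ Set.univ f) (hg : ConvexOn ℝ Set.univ g)
    (g' : E → E) (hg' : ∀ x, HasGradientAt g (g' x) x)
    (lam : ℝ) (hlam : 0 < lam) (xstar : E) :
    (∀ u, f xstar + g xstar ≤ f u + g u) ↔
      (∀ u, f xstar + ‖xstar - (xstar - lam • g' xstar)‖ ^ 2 / (2 * lam) ≤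
          f u + ‖u - (xstar - lam • g' xstar)‖ ^ 2 / (2 * lam)) := by
  set x := xstar
  set w := g' xstar with hw
  have hlam' : (2 * lam) ≠ 0 := by positivity
  -- expansion of the quadratic
  have hexp : ∀ u : E, ‖u - (x - lam • w)‖ ^ 2
      = ‖u - x‖ ^ 2 + 2 * lam * (inner ℝ (u - x) w : ℝ) + lam ^ 2 * ‖w‖ ^ 2 := by
    intro u
    have h1 : u - (x - lam • w) = (u - x) + lam • w := by abel
    rw [h1, norm_add_sq_real, real_inner_smul_right, norm_smul]
    simp [abs_of_pos hlam]
    ring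
  have hxx : ‖x - (x - lam • w)‖ ^ 2 = lam ^ 2 * ‖w‖ ^ 2 := by
    rw [hexp]; simp
  -- reduce RHS to Q
  have hQiff : (∀ u, f x + ‖x - (x - lam • w)‖ ^ 2 / (2 * lam) ≤
          f u + ‖u - (x - lam • w)‖ ^ 2 / (2 * lam)) ↔
      (∀ u, f x ≤ f u + (inner ℝ (u - x) w : ℝ) + ‖u - x‖ ^ 2 / (2 * lam)) := by
    apply forall_congr'
    intro u
    rw [hxx, hexp]
    have key : (‖u - x‖ ^ 2 + 2 * lam * (inner ℝ (u - x) w : ℝ) + lam ^ 2 * ‖w‖ ^ 2) / (2 * lam)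
        = ‖u - x‖ ^ 2 / (2 * lam) + (inner ℝ (u - x) w : ℝ) + lam ^ 2 * ‖w‖ ^ 2 / (2 * lam) := by
      field_simp
    rw [key]
    constructor <;> intro h <;> linarith
  rw [hQiff]
  have hconvf : ∀ (u : E) (t : ℝ), 0 ≤ t → t ≤ 1 →
      f (x + t • (u - x)) ≤ (1 - t) * f x + t * f u := by
    intro u t ht0 ht1
    have hpt : x + t • (u - x) = (1 - t) • x + t • u := by
      rw [smul_sub, sub_smul, one_smul]; abel
    rw [hpt]
    exact hf.2 (Set.mem_univ x) (Set.mem_univ u) (by linarith) ht0 (by ring)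
  have hconvg : ∀ (u : E) (t : ℝ), 0 ≤ t → t ≤ 1 →
      g (x + t • (u - x)) ≤ (1 - t) * g x + t * g u := by
    intro u t ht0 ht1
    have hpt : x + t • (u - x) = (1 - t) • x + t • u := by
      rw [smul_sub, sub_smul, one_smul]; abel
    rw [hpt]
    exact hg.2 (Set.mem_univ x) (Set.mem_univ u) (by linarith) ht0 (by ring)
  constructor
  · -- minimiser of f+g ⇒ Q
    intro hmin u
    set v := u - x
    have hder : HasDerivAt (fun t : ℝ => g (x + t • v)) (inner ℝ w v : ℝ) 0 :=
      dir_deriv (hg' x) v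
    have hkey : f x - f u ≤ (inner ℝ w v : ℝ) := by
      refine aux_le hder ?_
      intro t ht
      obtain ⟨ht0, ht1⟩ := ht
      rw [le_div_iff₀ ht0]
      have h1 := hmin (x + t • v)
      have h2 := hconvf u t ht0.le ht1
      simp only [zero_smul, add_zero]
      nlinarith [h1, h2]
    have hiw : (inner ℝ w v : ℝ) = (inner ℝ (u - x) w : ℝ) := real_inner_comm _ _
    have hnn : 0 ≤ ‖u - x‖ ^ 2 / (2 * lam) := by positivity
    nlinarith [hkey, hnn]
  · -- Q ⇒ minimiser of f+g
    intro hQ u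
    set v := u - x
    have hder : HasDerivAt (fun t : ℝ => g (x + t • v)) (inner ℝ w v : ℝ) 0 :=
      dir_deriv (hg' x) v
    -- first-order condition for g
    have hfo : (inner ℝ w v : ℝ) ≤ g u - g x := by
      refine aux_ge hder ?_
      intro t ht
      obtain ⟨ht0, ht1⟩ := ht
      rw [div_le_iff₀ ht0]
      have h2 := hconvg u t ht0.le ht1
      simp only [zero_smul, add_zero]
      have : x + (1:ℝ) • v = u := by simp [v]
      nlinarith [h2]
    -- f x ≤ f u + ⟪v, w⟫
    have hkey : f x ≤ f u + (inner ℝ v w : ℝ) := by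
      refine le_of_Ioc (c := ‖v‖ ^ 2 / (2 * lam)) (by positivity) ?_
      intro t ht
      obtain ⟨ht0, ht1⟩ := ht
      have h1 := hQ (x + t • v)
      have h2 := hconvf u t ht0.le ht1
      have h3 : (x + t • v) - x = t • v := by abel
      rw [h3] at h1
      have h4 : (inner ℝ (t • v) w : ℝ) = t * (inner ℝ v w : ℝ) := real_inner_smul_left _ _ _
      have h5 : ‖t • v‖ ^ 2 / (2 * lam) = t ^ 2 * (‖v‖ ^ 2 / (2 * lam)) := by
        rw [norm_smul]
        simp [abs_of_pos ht0]
        ring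
      rw [h4, h5] at h1
      nlinarith [h1, h2, sq_nonneg t, ht0.le, mul_nonneg (mul_nonneg ht0.le ht0.le) (le_of_lt (by positivity : (0:ℝ) < ‖v‖^2/(2*lam) + 1))]
    have hiw : (inner ℝ v w : ℝ) = (inner ℝ w v : ℝ) := real_inner_comm _ _
    linarith [hkey, hfo]
end

section
/- Let E be a Euclidean space, f : E → ℝ convex, and g : E → ℝ convex and differentiable with β-Lipschitz gradient for some β > 0 (i.e. ‖∇g(u) − ∇g(v)‖₂ ≤ β‖u − v‖₂ for all u, v). Fix x ∈ E and a step size λ with 0 < λ ≤ 1/β, and let x⁺ be a global minimiser of u ↦ f(u) + ‖u − (x − λ∇g(x))‖₂²/(2λ) (i.e. x⁺ = prox_{λf}(x − λ∇g(x)), one forward–backward step from x). Then f(x⁺) + g(x⁺) ≤ f(x) + g(x). -/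
open InnerProductSpace

/-- Descent lemma: a differentiable function with `β`-Lipschitz gradient satisfies
`g y ≤ g x + ⟪∇g x, y - x⟫ + β/2 ‖y - x‖²`. -/
lemma descent_lemma
    {E : Type*} [NormedAddCommGroup E] [InnerProductSpace ℝ E] [CompleteSpace E]
    (g : E → ℝ) (g' : E → E) (hg' : ∀ x, HasGradientAt g (g' x) x)
    (β : ℝ) (hβ : 0 ≤ β)
    (hlip : ∀ u v, ‖g' u - g' v‖ ≤ β * ‖u - v‖) (x y : E) :
    g y ≤ g x + ⟪g' x, y - x⟫_ℝ + β / 2 * ‖y - x‖ ^ 2 := by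
  set d := y - x with hd
  set φ : ℝ → ℝ := fun t => g (x + t • d) - t * ⟪g' x, d⟫_ℝ - β * t ^ 2 / 2 * ‖d‖ ^ 2
    with hφ
  have hline : ∀ t : ℝ, HasDerivAt (fun t : ℝ => x + t • d) d t := by
    intro t
    simpa using ((hasDerivAt_id t).smul_const d).const_add x
  have hder : ∀ t : ℝ, HasDerivAt φ
      (⟪g' (x + t • d), d⟫_ℝ - ⟪g' x, d⟫_ℝ - β * t * ‖d‖ ^ 2) t := by
    intro t
    have h1 : HasDerivAt (fun t : ℝ => g (x + t • d)) (⟪g' (x + t • d), d⟫_ℝ) t := by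
      have := ((hg' (x + t • d)).hasFDerivAt).comp_hasDerivAt t (hline t)
      simp [InnerProductSpace.toDual_apply_apply] at this; exact this
    have h2 : HasDerivAt (fun t : ℝ => t * ⟪g' x, d⟫_ℝ) (⟪g' x, d⟫_ℝ) t := by
      simpa using (hasDerivAt_id t).mul_const (⟪g' x, d⟫_ℝ)
    have h3 : HasDerivAt (fun t : ℝ => β * t ^ 2 / 2 * ‖d‖ ^ 2) (β * t * ‖d‖ ^ 2) t := by
      have : HasDerivAt (fun t : ℝ => t ^ 2) (2 * t) t := by
        simpa using hasDerivAt_pow 2 t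
      have := (((this.const_mul β).div_const 2).mul_const (‖d‖ ^ 2))
      exact this.congr_deriv (by ring)
    exact (h1.sub h2).sub h3
  have hmono : AntitoneOn φ (Set.Icc 0 1) := by
    apply antitoneOn_of_deriv_nonpos (convex_Icc 0 1)
    · exact fun t _ => ((hder t).continuousAt).continuousWithinAt
    · exact fun t _ => ((hder t).differentiableAt).differentiableWithinAt
    · intro t ht
      rw [interior_Icc] at ht
      rw [(hder t).deriv]
      have h1 : ⟪g' (x + t • d) - g' x, d⟫_ℝ ≤ ‖g' (x + t • d) - g' x‖ * ‖d‖ :=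
        real_inner_le_norm _ _
      have h2 : ‖g' (x + t • d) - g' x‖ ≤ β * (t * ‖d‖) := by
        have := hlip (x + t • d) x
        simpa [norm_smul, abs_of_pos ht.1] using this
      have hd0 : (0:ℝ) ≤ ‖d‖ := norm_nonneg d
      nlinarith [inner_sub_left (𝕜 := ℝ) (g' (x + t • d)) (g' x) d]
  have := hmono (Set.left_mem_Icc.2 zero_le_one) (Set.right_mem_Icc.2 zero_le_one)
    zero_le_one
  simp only [hφ] at this
  simp only [zero_smul, add_zero, one_smul, zero_mul, zero_pow, sub_zero, one_pow,
    mul_one, one_mul, ne_eq, OfNat.ofNat_ne_zero, not_false_eq_true, mul_zero] at this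
  have hy : x + d = y := by simp [hd]
  rw [hy] at this
  nlinarith [this]

/-- Descent property of the forward–backward splitting iteration (equation 18 of the
paper, inequality 30 in the proof of Theorem 1): for convex `f`, convex differentiable
`g` with `β`-Lipschitz gradient, and step size `0 < λ ≤ 1/β`, one forward–backward
step `x⁺ = prox_{λf}(x - λ∇g(x))` does not increase the total objective `f + g`. -/
theorem forward_backward_descent
    {E : Type*} [NormedAddCommGroup E] [InnerProductSpace ℝ E] [FiniteDimensional ℝ E]
    (f g : E → ℝ) (hf : ConvexOn ℝ Set.univ f) (hg : ConvexOn ℝ Set.univ g)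
    (g' : E → E) (hg' : ∀ x, HasGradientAt g (g' x) x)
    (β : ℝ) (hβ : 0 < β)
    (hlip : ∀ u v, ‖g' u - g' v‖ ≤ β * ‖u - v‖)
    (lam : ℝ) (hlam0 : 0 < lam) (hlam : lam ≤ 1 / β)
    (x xp : E)
    (hxp : ∀ u, f xp + ‖xp - (x - lam • g' x)‖ ^ 2 / (2 * lam) ≤
        f u + ‖u - (x - lam • g' x)‖ ^ 2 / (2 * lam)) :
    f xp + g xp ≤ f x + g x := by
  set v := g' x with hv
  set d := xp - x with hd
  -- Step 1: prox inequality at u = x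
  have h1 := hxp x
  have e1 : xp - (x - lam • v) = d + lam • v := by rw [hd]; abel
  have e2 : x - (x - lam • v) = lam • v := by abel
  rw [e1, e2] at h1
  have hnorm1 : ‖d + lam • v‖ ^ 2 = ‖d‖ ^ 2 + 2 * (lam * ⟪d, v⟫_ℝ) + lam ^ 2 * ‖v‖ ^ 2 := by
    rw [norm_add_sq_real, real_inner_smul_right, norm_smul]
    rw [Real.norm_eq_abs, abs_of_pos hlam0]
    ring
  have hnorm2 : ‖lam • v‖ ^ 2 = lam ^ 2 * ‖v‖ ^ 2 := by
    rw [norm_smul, Real.norm_eq_abs, abs_of_pos hlam0]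
    ring
  rw [hnorm1, hnorm2] at h1
  have hstep1 : f xp + ⟪d, v⟫_ℝ + ‖d‖ ^ 2 / (2 * lam) ≤ f x := by
    have hl : (2 * lam) ≠ 0 := by positivity
    have e3 : (‖d‖ ^ 2 + 2 * (lam * ⟪d, v⟫_ℝ) + lam ^ 2 * ‖v‖ ^ 2) / (2 * lam)
        = ‖d‖ ^ 2 / (2 * lam) + ⟪d, v⟫_ℝ + lam ^ 2 * ‖v‖ ^ 2 / (2 * lam) := by
      field_simp
    rw [e3] at h1
    linarith
  -- Step 2: descent lemma
  have hstep2 : g xp ≤ g x + ⟪v, d⟫_ℝ + β / 2 * ‖d‖ ^ 2 :=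
    descent_lemma g g' hg' β hβ.le hlip x xp
  -- Step 3: β ≤ 1/lam
  have hβlam : β ≤ 1 / lam := by
    rw [le_div_iff₀ hlam0]
    rw [le_div_iff₀ hβ] at hlam
    linarith
  have hcomm : ⟪v, d⟫_ℝ = ⟪d, v⟫_ℝ := real_inner_comm _ _
  have hdn : (0:ℝ) ≤ ‖d‖ ^ 2 := sq_nonneg _
  have hkey : β / 2 * ‖d‖ ^ 2 ≤ ‖d‖ ^ 2 / (2 * lam) := by
    have h2 : ‖d‖ ^ 2 / (2 * lam) = (1 / lam) * ‖d‖ ^ 2 / 2 := by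
      field_simp
    have h3 : β * ‖d‖ ^ 2 ≤ (1 / lam) * ‖d‖ ^ 2 :=
      mul_le_mul_of_nonneg_right hβlam hdn
    rw [h2]
    linarith
  linarith [hstep1, hstep2, hcomm ▸ hstep2]
end
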